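/- Return-time bound for the critical directed Erdős–Rényi random graph. For every i ∈ {1,…,N} and every integer k ≥ 1: P̃(τ^i ≤ k) ≤ ((k−1)/N)·exp(ϑ k / N). -/

import Mathlib

open MeasureTheory ProbabilityTheory
open scoped ENNReal

/-- The sets `𝒱^n_{i→·}` of neurons reachable from `i` in `n` steps along the directed
graph `W`: `reach W i 1 = {j : W_{i→j} = 1}` and
`reach W i (n+1) = {j : ∃ k ∈ reach W i n, W_{k→j} = 1}` (with `reach W i 0 = {i}`). -/
def reach {N : ℕ} (W : Fin N → Fin N → Bool) (i : Fin N) : ℕ → Finset (Fin N)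
  | 0 => {i}
  | n + 1 => Finset.univ.filter (fun j => ∃ k ∈ reach W i n, W k j = true)

/-- From membership in `reach` we can produce an explicit walk. -/
lemma walk_of_reach {N : ℕ} (W : Fin N → Fin N → Bool) (i : Fin N) :
    ∀ n, ∀ j ∈ reach W i n, ∃ w : ℕ → Fin N, w 0 = i ∧ w n = j ∧
      ∀ t, t < n → W (w t) (w (t + 1)) = true := by
  intro n
  induction n with
  | zero =>
      intro j hj
      simp [reach] at hj
      exact ⟨fun _ => i, rfl, hj.symm, by omega⟩
  | succ n ih =>
      intro j hj
      simp only [reach, Finset.mem_filter] at hj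
      obtain ⟨-, kk, hk, hWkj⟩ := hj
      obtain ⟨w, hw0, hwn, hwe⟩ := ih kk hk
      refine ⟨fun t => if t ≤ n then w t else j, by simp [hw0], by simp, ?_⟩
      intro t ht
      rcases Nat.lt_or_ge t n with h | h
      · simp only [if_pos (by omega : t ≤ n), if_pos (by omega : t + 1 ≤ n)]
        exact hwe t h
      · have ht' : t = n := by omega
        simp only [ht', if_pos le_rfl, if_neg (by omega : ¬ n + 1 ≤ n), hwn]
        exact hWkj

/-- Loop erasure: from a closed walk at `i` of length `n ≥ 1` (in a loopless directed
graph) we can extract a simple cycle through `i` of length `m` with `2 ≤ m ≤ n`. -/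
lemma cycle_extract {N : ℕ} (W : Fin N → Fin N → Bool) (hd : ∀ j, W j j = false)
    (i : Fin N) :
    ∀ n, 1 ≤ n → ∀ w : ℕ → Fin N, w 0 = i → w n = i →
      (∀ t, t < n → W (w t) (w (t + 1)) = true) →
      ∃ m, 2 ≤ m ∧ m ≤ n ∧ ∃ v : ℕ → Fin N, v 0 = i ∧ v m = i ∧
        (∀ a, a < m → ∀ b, b < m → v a = v b → a = b) ∧
        ∀ t, t < m → W (v t) (v (t + 1)) = true := by
  intro n
  induction n using Nat.strong_induction_on with
  | _ n ih =>
    intro hn w hw0 hwn hwe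
    by_cases hinj : ∀ a, a < n → ∀ b, b < n → w a = w b → a = b
    · -- already a simple cycle
      have h2 : 2 ≤ n := by
        rcases Nat.lt_or_ge n 2 with h | h
        · exfalso
          have : n = 1 := by omega
          subst this
          have := hwe 0 (by omega)
          rw [hw0, hwn] at this
          simp [hd i] at this
        · exact h
      exact ⟨n, h2, le_rfl, w, hw0, hwn, hinj, hwe⟩
    · push_neg at hinj
      obtain ⟨a, ha, b, hb, hab, hne⟩ := hinj
      -- wlog a < b
      obtain ⟨a, b, ha, hb, hlt, hab⟩ :
          ∃ a b, a < n ∧ b < n ∧ a < b ∧ w a = w b := by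
        rcases hne.lt_or_gt with h | h
        · exact ⟨a, b, ha, hb, h, hab⟩
        · exact ⟨b, a, hb, ha, h, hab.symm⟩
      set d := b - a with hd'
      have hdpos : 0 < d := by omega
      have hn' : n - d < n := by omega
      have hn'1 : 1 ≤ n - d := by omega
      refine (ih (n - d) hn' hn'1 (fun u => if u ≤ a then w u else w (u + d))
        (by simp [hw0]) ?_ ?_).imp ?_
      · have h1 : ¬ (n - d ≤ a) := by omega
        simp only [if_neg h1]
        have : n - d + d = n := by omega
        rw [this, hwn]
      · intro t ht
        rcases Nat.lt_or_ge t a with h | h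
        · simp only [if_pos (by omega : t ≤ a), if_pos (by omega : t + 1 ≤ a)]
          exact hwe t (by omega)
        · rcases Nat.eq_or_lt_of_le h with h' | h'
          · subst h'
            simp only [if_pos le_rfl, if_neg (by omega : ¬ a + 1 ≤ a)]
            have : a + 1 + d = b + 1 := by omega
            rw [this, hab]
            exact hwe b hb
          · simp only [if_neg (by omega : ¬ t ≤ a), if_neg (by omega : ¬ t + 1 ≤ a)]
            have : t + 1 + d = t + d + 1 := by omega
            rw [this]
            exact hwe (t + d) (by omega)
      · intro m hm
        exact ⟨hm.1, by omega, hm.2.2⟩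

/-- Numeric estimate for one term of the union bound. -/
lemma cycle_term_bound (N k m : ℕ) (hN : 0 < N) (ϑ : ℝ) (hϑ : 0 < ϑ)
    (hm2 : 2 ≤ m) (hmk : m ≤ k) :
    (N : ℝ) ^ (m - 1) * ((1 + ϑ / N) / N) ^ m ≤ Real.exp (ϑ * k / N) / N := by
  have hNpos : (0 : ℝ) < N := Nat.cast_pos.mpr hN
  have hl : (1:ℝ) ≤ 1 + ϑ / N := by
    have : 0 < ϑ / N := by positivity
    linarith
  have heq : (N : ℝ) ^ (m - 1) * ((1 + ϑ / N) / N) ^ m = (1 + ϑ / N) ^ m / N := by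
    rw [div_pow]
    have : (N : ℝ) ^ m = (N : ℝ) ^ (m - 1) * N := by
      rw [← pow_succ]
      congr 1
      omega
    rw [this]
    field_simp
  rw [heq]
  gcongr
  calc (1 + ϑ / N) ^ m ≤ (1 + ϑ / N) ^ k := by
        apply pow_le_pow_right₀ hl hmk
    _ ≤ Real.exp (ϑ / N) ^ k := by
        apply pow_le_pow_left₀ (by linarith) ?_ k
        rw [add_comm]
        exact Real.add_one_le_exp _
    _ = Real.exp (ϑ * k / N) := by
        rw [← Real.exp_nat_mul]
        congr 1
        ring

/-- **Return-time bound for the critical directed Erdős–Rényi random graph.**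
If `(W_{i→j})_{i≠j}` are i.i.d. Bernoulli(`p_N`) with `p_N = λ/N`, `λ = 1 + ϑ/N`,
then for every `i` and every `k ≥ 1`,
`P̃(τ^i ≤ k) ≤ ((k-1)/N) exp(ϑ k / N)`, where `τ^i = inf{n ≥ 1 : i ∈ 𝒱^n_{i→·}}`. -/
theorem return_time_bound
    {Ωt : Type*} [MeasurableSpace Ωt] (Pt : Measure Ωt) [IsProbabilityMeasure Pt]
    (N : ℕ) (hN : 0 < N) (ϑ : ℝ) (hϑ : 0 < ϑ)
    (W : Ωt → Fin N → Fin N → Bool)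
    (hmeas : ∀ p : Fin N × Fin N, Measurable (fun ω => W ω p.1 p.2))
    (hdiag : ∀ ω j, W ω j j = false)
    (hber : ∀ i j : Fin N, i ≠ j →
      Pt {ω | W ω i j = true} = ENNReal.ofReal ((1 + ϑ / N) / N))
    (hindep : iIndepFun (m := fun _ : {p : Fin N × Fin N // p.1 ≠ p.2} =>
        (inferInstance : MeasurableSpace Bool))
      (fun p ω => W ω p.1.1 p.1.2) Pt)
    (i : Fin N) (k : ℕ) (hk : 1 ≤ k) :
    Pt {ω | ∃ n : ℕ, 1 ≤ n ∧ n ≤ k ∧ i ∈ reach (W ω) i n}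
      ≤ ENNReal.ofReal (((k : ℝ) - 1) / N * Real.exp (ϑ * k / N)) := by
  classical
  set pN : ℝ := (1 + ϑ / N) / N with hpN
  have hpNnn : 0 ≤ pN := by
    have hNpos : (0 : ℝ) < N := Nat.cast_pos.mpr hN
    positivity
  set q : ℝ≥0∞ := ENNReal.ofReal pN with hq
  set C : (m : ℕ) → Finset (Fin (m+1) → Fin N) := fun m =>
    Finset.univ.filter (fun g => g 0 = i ∧ g (Fin.last m) = g 0 ∧
      Set.InjOn g {x : Fin (m+1) | x.val < m}) with hC
  set E : (m : ℕ) → (Fin (m+1) → Fin N) → Set Ωt := fun m g =>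
    ⋂ t : Fin m, {ω | W ω (g t.castSucc) (g t.succ) = true} with hE
  -- Step 1: union bound over simple cycles through `i`.
  have hsub : {ω | ∃ n : ℕ, 1 ≤ n ∧ n ≤ k ∧ i ∈ reach (W ω) i n}
      ⊆ ⋃ m ∈ Finset.Icc 2 k, ⋃ g ∈ C m, E m g := by
    rintro ω ⟨n, hn1, hnk, hre⟩
    obtain ⟨w, hw0, hwn, hwe⟩ := walk_of_reach (W ω) i n i hre
    obtain ⟨m, hm2, hmn, v, hv0, hvm, hvinj, hve⟩ :=
      cycle_extract (W ω) (hdiag ω) i n hn1 w hw0 hwn hwe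
    refine Set.mem_iUnion₂.mpr ⟨m, Finset.mem_Icc.mpr ⟨hm2, hmn.trans hnk⟩, ?_⟩
    refine Set.mem_iUnion₂.mpr ⟨fun x => v x.val, ?_, ?_⟩
    · simp only [hC, Finset.mem_filter, Finset.mem_univ, true_and]
      refine ⟨by simpa using hv0, ?_, ?_⟩
      · show v (Fin.last m).val = v ((0 : Fin (m+1)).val)
        simp only [Fin.val_last, Fin.val_zero, hvm, hv0]
      · intro x hx y hy hxy
        exact Fin.ext (hvinj x.val hx y.val hy hxy)
    · refine Set.mem_iInter.mpr fun t => ?_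
      show W ω (v t.castSucc.val) (v t.succ.val) = true
      have := hve t.val t.isLt
      simpa [Fin.coe_castSucc, Fin.val_succ] using this
  -- Step 2: probability of each cycle event.
  have hEmeas : ∀ m, 2 ≤ m → ∀ g ∈ C m, Pt (E m g) = q ^ m := by
    intro m hm g hg
    simp only [hC, Finset.mem_filter, Finset.mem_univ, true_and] at hg
    obtain ⟨hg0, hgl, hginj⟩ := hg
    have hne : ∀ t : Fin m, g t.castSucc ≠ g t.succ := by
      intro t heq
      by_cases h : (t.val : ℕ) + 1 < m
      · have := hginj (show (t.castSucc : Fin (m+1)).val < m by simp)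
          (show (t.succ : Fin (m+1)).val < m by simpa using h) heq
        have : t.val = t.val + 1 := congrArg Fin.val this
        omega
      · have hsl : t.succ = Fin.last m := by
          apply Fin.ext
          simp only [Fin.val_succ, Fin.val_last]
          omega
        rw [hsl, hgl] at heq
        have := hginj (show (t.castSucc : Fin (m+1)).val < m by simp)
          (show ((0 : Fin (m+1))).val < m by simp; omega) heq
        have : t.val = 0 := by simpa using congrArg Fin.val this
        omega
    set e : Fin m → {p : Fin N × Fin N // p.1 ≠ p.2} :=
      fun t => ⟨(g t.castSucc, g t.succ), hne t⟩ with he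
    have einj : Function.Injective e := by
      intro t s hts
      have h1 : g t.castSucc = g s.castSucc := congrArg (fun p => p.1.1) hts
      have := hginj (show (t.castSucc : Fin (m+1)).val < m by simp)
        (show (s.castSucc : Fin (m+1)).val < m by simp) h1
      have : t.val = s.val := by simpa using congrArg Fin.val this
      exact Fin.ext this
    set A : {p : Fin N × Fin N // p.1 ≠ p.2} → Set Ωt :=
      fun p => {ω | W ω p.1.1 p.1.2 = true} with hA
    have hEeq : E m g = ⋂ p ∈ Finset.image e Finset.univ, A p := by
      ext ω
      simp only [hE, Set.mem_iInter, Finset.mem_image, Finset.mem_univ, true_and,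
        Set.mem_setOf_eq, hA]
      constructor
      · rintro h p ⟨t, rfl⟩
        exact h t
      · intro h t
        exact h (e t) ⟨t, rfl⟩
    have hprod := hindep.meas_biInter (S := Finset.image e Finset.univ) (s := A)
      (fun p _ => ⟨{true}, trivial, rfl⟩)
    rw [hEeq, hprod]
    have hfac : ∀ p ∈ Finset.image e Finset.univ, Pt (A p) = q :=
      fun p _ => hber p.1.1 p.1.2 p.2
    rw [Finset.prod_congr rfl hfac, Finset.prod_const,
      Finset.card_image_of_injective _ einj, Finset.card_univ, Fintype.card_fin]
  -- Step 3: counting simple cycles.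
  have hcard : ∀ m, 2 ≤ m → (C m).card ≤ N ^ (m - 1) := by
    intro m hm
    have key : (C m).card ≤ (Finset.univ : Finset (Fin (m-1) → Fin N)).card := by
      apply Finset.card_le_card_of_injOn
        (fun (g : Fin (m+1) → Fin N) (t : Fin (m-1)) => g ⟨t.val + 1, by omega⟩)
        (fun g _ => Finset.mem_univ _)
      intro g hg g' hg' hgg
      simp only [hC, Finset.coe_filter, Set.mem_setOf_eq, Finset.mem_univ,
        true_and] at hg hg'
      funext x
      rcases Nat.lt_or_ge x.val 1 with h | h
      · have hx : x = 0 := by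
          apply Fin.ext
          simp only [Fin.val_zero]
          omega
        rw [hx, hg.1, hg'.1]
      · rcases Nat.lt_or_ge x.val m with h2 | h2
        · have := congrFun hgg ⟨x.val - 1, by omega⟩
          simp only at this
          have hx : (⟨x.val - 1 + 1, by omega⟩ : Fin (m+1)) = x := by
            apply Fin.ext; simp; omega
          rwa [hx] at this
        · have hx : x = Fin.last m := by
            apply Fin.ext
            simp only [Fin.val_last]
            have := x.isLt
            omega
          rw [hx, hg.2.1, hg'.2.1, hg.1, hg'.1]
    simpa using key
  -- Step 4: put everything together.
  have hNpos : (0 : ℝ) < N := Nat.cast_pos.mpr hN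
  calc Pt {ω | ∃ n : ℕ, 1 ≤ n ∧ n ≤ k ∧ i ∈ reach (W ω) i n}
      ≤ Pt (⋃ m ∈ Finset.Icc 2 k, ⋃ g ∈ C m, E m g) := measure_mono hsub
    _ ≤ ∑ m ∈ Finset.Icc 2 k, Pt (⋃ g ∈ C m, E m g) := measure_biUnion_finset_le _ _
    _ ≤ ∑ m ∈ Finset.Icc 2 k, ENNReal.ofReal (Real.exp (ϑ * k / N) / N) := by
        apply Finset.sum_le_sum
        intro m hm
        rw [Finset.mem_Icc] at hm
        calc Pt (⋃ g ∈ C m, E m g) ≤ ∑ g ∈ C m, Pt (E m g) :=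
              measure_biUnion_finset_le _ _
          _ = ∑ _g ∈ C m, q ^ m :=
              Finset.sum_congr rfl (fun g hg => hEmeas m hm.1 g hg)
          _ = ((C m).card : ℝ≥0∞) * q ^ m := by
              rw [Finset.sum_const, nsmul_eq_mul]
          _ ≤ ((N ^ (m - 1) : ℕ) : ℝ≥0∞) * q ^ m := by
              gcongr
              exact_mod_cast hcard m hm.1
          _ = ENNReal.ofReal ((N : ℝ) ^ (m - 1) * pN ^ m) := by
              rw [ENNReal.ofReal_mul (by positivity), ENNReal.ofReal_pow hpNnn]
              congr 1
              rw [← ENNReal.ofReal_natCast (N ^ (m - 1))]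
              congr 1
              push_cast
              ring
          _ ≤ ENNReal.ofReal (Real.exp (ϑ * k / N) / N) :=
              ENNReal.ofReal_le_ofReal
                (cycle_term_bound N k m hN ϑ hϑ hm.1 hm.2)
    _ ≤ ENNReal.ofReal (((k : ℝ) - 1) / N * Real.exp (ϑ * k / N)) := by
        rw [Finset.sum_const, nsmul_eq_mul, Nat.card_Icc]
        have hcount : ((k + 1 - 2 : ℕ) : ℝ≥0∞) = ENNReal.ofReal ((k : ℝ) - 1) := by
          rw [← ENNReal.ofReal_natCast]
          congr 1
          have h2 : k + 1 - 2 = k - 1 := by omega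
          rw [h2, Nat.cast_sub hk]
          push_cast
          ring
        rw [hcount, ← ENNReal.ofReal_mul (by
          have : (1:ℝ) ≤ (k:ℝ) := by exact_mod_cast hk
          linarith)]
        apply ENNReal.ofReal_le_ofReal
        rw [div_mul_eq_mul_div, mul_div_assoc]
        apply le_of_eq
        ring
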